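/- For the curvature quotient f_{n,k} with 1 ≤ k < n, the quantity μ_∞ := liminf over A → ∞ within the level set {f_{n,k} = 1} of Σᵢ ∂_i f_{n,k}(A) satisfies μ_∞ = (n/k)^{1/(n-k)} > 1. In particular, for A = (λ, …, λ, t) on the unit level set with t → ∞, the sum of partial derivatives tends to (n/k)^{1/(n-k)}. -/

import Mathlib

open Filter Topology

/-- The `k`-th elementary symmetric polynomial in `m` real variables. -/
def esymm (m k : ℕ) (x : Fin m → ℝ) : ℝ :=
  ∑ s ∈ Finset.univ.powersetCard k, ∏ i ∈ s, x i

/-- The curvature quotient `f_{m,k} = c_{m,k} (σ_m/σ_k)^{1/(m-k)}`,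
with `c_{m,k} = C(m,k)^{1/(m-k)}`. -/
noncomputable def fnk (m k : ℕ) (x : Fin m → ℝ) : ℝ :=
  (m.choose k : ℝ) ^ ((1 : ℝ) / ((m : ℝ) - (k : ℝ))) *
    (esymm m m x / esymm m k x) ^ ((1 : ℝ) / ((m : ℝ) - (k : ℝ)))

lemma snoc_ne_last (n : ℕ) (lam t : ℝ) {i : Fin (n+1)} (hi : i ≠ Fin.last n) :
    (Fin.snoc (fun _ => lam) t : Fin (n+1) → ℝ) i = lam := by
  rcases Fin.exists_castSucc_eq.2 hi with ⟨j, rfl⟩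
  simp

lemma esymm_snoc (n j : ℕ) (hj : 1 ≤ j) (lam t : ℝ) :
    esymm (n+1) j (Fin.snoc (fun _ => lam) t) =
      (n.choose j : ℝ) * lam ^ j + (n.choose (j-1) : ℝ) * lam ^ (j-1) * t := by
  obtain ⟨j', rfl⟩ : ∃ j', j = j' + 1 := ⟨j - 1, (Nat.succ_pred_eq_of_pos hj).symm⟩
  set S : Finset (Fin (n+1)) := Finset.univ.erase (Fin.last n) with hS
  have hlast : Fin.last n ∉ S := Finset.notMem_erase _ _
  have hins : insert (Fin.last n) S = Finset.univ := Finset.insert_erase (Finset.mem_univ _)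
  have hcard : S.card = n := by
    rw [hS, Finset.card_erase_of_mem (Finset.mem_univ _)]
    simp
  rw [esymm, ← hins, Finset.powersetCard_succ_insert hlast, Finset.sum_union]
  · have e1 : ∀ s ∈ S.powersetCard (j'+1),
        (∏ i ∈ s, (Fin.snoc (fun _ => lam) t : Fin (n+1) → ℝ) i) = lam ^ (j'+1) := by
      intro s hs
      rw [Finset.mem_powersetCard] at hs
      rw [Finset.prod_congr rfl (fun i hi => snoc_ne_last n lam t
        (fun h => hlast (hs.1 (h ▸ hi)))), Finset.prod_const, hs.2]
    have e2 : ∀ s ∈ (S.powersetCard j').image (insert (Fin.last n)),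
        (∏ i ∈ s, (Fin.snoc (fun _ => lam) t : Fin (n+1) → ℝ) i) = lam ^ j' * t := by
      intro s hs
      rcases Finset.mem_image.1 hs with ⟨u, hu, rfl⟩
      rw [Finset.mem_powersetCard] at hu
      have hls : Fin.last n ∉ u := fun h => hlast (hu.1 h)
      rw [Finset.prod_insert hls, Fin.snoc_last,
        Finset.prod_congr rfl (fun i hi => snoc_ne_last n lam t (fun h => hlast (hu.1 (h ▸ hi)))),
        Finset.prod_const, hu.2]
      ring
    rw [Finset.sum_congr rfl e1, Finset.sum_congr rfl e2, Finset.sum_const, Finset.sum_const,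
      Finset.card_powersetCard, hcard, Finset.card_image_of_injOn, Finset.card_powersetCard, hcard,
      nsmul_eq_mul, nsmul_eq_mul]
    · simp only [Nat.add_sub_cancel]; ring
    · intro x hx y hy hxy
      rw [Finset.mem_coe, Finset.mem_powersetCard] at hx hy
      have key : ∀ z : Finset (Fin (n+1)), z ⊆ S → (insert (Fin.last n) z).erase (Fin.last n) = z :=
        fun z hz => Finset.erase_insert (fun h => hlast (hz h))
      rw [← key x hx.1, ← key y hy.1, hxy]
  · rw [Finset.disjoint_left]
    intro s hs hs'
    rw [Finset.mem_powersetCard] at hs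
    rcases Finset.mem_image.1 hs' with ⟨u, _, rfl⟩
    exact hlast (hs.1 (Finset.mem_insert_self _ _))

lemma esymm_diff (m j : ℕ) : Differentiable ℝ (esymm m j) := by
  unfold esymm
  apply Differentiable.fun_sum
  intro s _
  intro x
  exact (hasFDerivAt_finset_prod (u := s) (x := x)).differentiableAt

lemma esymm_pos (m j : ℕ) (hj : j ≤ m) (x : Fin m → ℝ) (hx : ∀ i, 0 < x i) :
    0 < esymm m j x := by
  apply Finset.sum_pos
  · intro s _
    exact Finset.prod_pos fun i _ => hx i
  · exact Finset.powersetCard_nonempty.2 (by simpa using hj)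

section main
variable (n k : ℕ)

lemma snoc_pos (lam t : ℝ) (hl : 0 < lam) (ht : 0 < t) (i : Fin (n+1)) :
    0 < (Fin.snoc (fun _ => lam) t : Fin (n+1) → ℝ) i := by
  rcases eq_or_ne i (Fin.last n) with rfl | h
  · simpa using ht
  · rw [snoc_ne_last n lam t h]; exact hl

lemma sum_partials (hk1 : 1 ≤ k) (hkn : k ≤ n) (lam t : ℝ) (hl : 0 < lam) (ht : 0 < t)
    (h1 : fnk (n+1) k (Fin.snoc (fun _ => lam) t) = 1) :
    ∑ i : Fin (n+1), fderiv ℝ (fnk (n+1) k) (Fin.snoc (fun _ => lam) t) (Pi.single i 1)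
      = (1/((n:ℝ)+1-k)) * (((n:ℝ)*lam^(n-1)*t + lam^n)/(lam^n*t)
          - ((n.choose k:ℝ)*k*lam^(k-1) + (n.choose (k-1):ℝ)*(((k:ℝ)-1)*lam^(k-2)*t + lam^(k-1)))
            /((n.choose k:ℝ)*lam^k + (n.choose (k-1):ℝ)*lam^(k-1)*t)) := by
  set x₀ : Fin (n+1) → ℝ := Fin.snoc (fun _ => lam) t with hx₀
  set p : ℝ := 1/((n:ℝ)+1-(k:ℝ)) with hp
  set a : ℝ := (n.choose k : ℝ) with ha
  set b : ℝ := (n.choose (k-1) : ℝ) with hb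
  set C : ℝ := ((n+1).choose k : ℝ) ^ p with hC
  have hcast : ((n+1 : ℕ) : ℝ) - (k:ℝ) = (n:ℝ)+1-(k:ℝ) := by push_cast; ring
  have hxpos : ∀ i, 0 < x₀ i := snoc_pos n lam t hl ht
  have hσk : 0 < esymm (n+1) k x₀ := esymm_pos _ _ (by omega) _ hxpos
  have hσm : 0 < esymm (n+1) (n+1) x₀ := esymm_pos _ _ le_rfl _ hxpos
  -- values
  have hA0 : esymm (n+1) (n+1) x₀ = lam^n*t := by
    rw [hx₀, esymm_snoc n (n+1) (by omega)]
    simp [Nat.choose_eq_zero_of_lt (Nat.lt_succ_self n)]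
  have hB0 : esymm (n+1) k x₀ = a*lam^k + b*lam^(k-1)*t := by
    rw [hx₀, esymm_snoc n k hk1]
  have hA0pos : (0:ℝ) < lam^n*t := hA0 ▸ hσm
  have hB0pos : (0:ℝ) < a*lam^k + b*lam^(k-1)*t := hB0 ▸ hσk
  -- differentiability of fnk at x₀
  have hdiff : DifferentiableAt ℝ (fnk (n+1) k) x₀ := by
    have hd1 : DifferentiableAt ℝ (fun x => esymm (n+1) (n+1) x / esymm (n+1) k x) x₀ := by
      simp only [div_eq_mul_inv]
      exact ((esymm_diff (n+1) (n+1)) x₀).mul (((esymm_diff (n+1) k) x₀).inv hσk.ne')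
    have hd2 := hd1.rpow_const (p := ((1:ℝ)/(((n+1:ℕ):ℝ) - (k:ℝ))))
      (Or.inl (div_pos hσm hσk).ne')
    exact hd2.const_mul _
  -- sum of partials = directional derivative along (1,…,1)
  have hsum : ∑ i : Fin (n+1), fderiv ℝ (fnk (n+1) k) x₀ (Pi.single i 1)
      = fderiv ℝ (fnk (n+1) k) x₀ (fun _ => 1) := by
    rw [← map_sum]
    congr 1
    exact Finset.univ_sum_single _
  -- the curve γ
  set γ : ℝ → (Fin (n+1) → ℝ) := fun s => x₀ + s • (fun _ => (1:ℝ)) with hγ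
  have hγ0 : γ 0 = x₀ := by simp [hγ]
  have hγd : HasDerivAt γ (fun _ => (1:ℝ)) 0 := by
    have h := ((hasDerivAt_id (0:ℝ)).smul_const (fun _ => (1:ℝ) : Fin (n+1) → ℝ)).const_add x₀
    rw [one_smul] at h; exact h
  have hγeq : ∀ s, γ s = Fin.snoc (fun _ => lam + s) (t + s) := by
    intro s
    funext i
    rcases eq_or_ne i (Fin.last n) with rfl | h
    · simp [hγ, hx₀]
    · rcases Fin.exists_castSucc_eq.2 h with ⟨j, rfl⟩
      simp [hγ, hx₀]
  have hcomp : HasDerivAt (fun s => fnk (n+1) k (γ s)) (fderiv ℝ (fnk (n+1) k) x₀ (fun _ => 1)) 0 := by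
    have hfd : HasFDerivAt (fnk (n+1) k) (fderiv ℝ (fnk (n+1) k) x₀) (γ 0) := by
      rw [hγ0]; exact hdiff.hasFDerivAt
    exact hfd.comp_hasDerivAt 0 hγd
  -- explicit formula for fnk ∘ γ
  have hφ : (fun s => fnk (n+1) k (γ s)) = fun s =>
      C * (((lam+s)^n*(t+s)) / (a*(lam+s)^k + b*(lam+s)^(k-1)*(t+s))) ^ p := by
    funext s
    rw [hγeq s, fnk, esymm_snoc n (n+1) (by omega), esymm_snoc n k hk1, hcast]
    simp [Nat.choose_eq_zero_of_lt (Nat.lt_succ_self n), hC, ha, hb, hp]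
  -- explicit derivative
  set A' : ℝ := (n:ℝ)*lam^(n-1)*t + lam^n with hA'
  set B' : ℝ := a*(k:ℝ)*lam^(k-1) + b*(((k:ℝ)-1)*lam^(k-2)*t + lam^(k-1)) with hB'
  have hls : HasDerivAt (fun s : ℝ => lam + s) 1 0 := by
    simpa using (hasDerivAt_id (0:ℝ)).const_add lam
  have hts : HasDerivAt (fun s : ℝ => t + s) 1 0 := by
    simpa using (hasDerivAt_id (0:ℝ)).const_add t
  have hAd : HasDerivAt (fun s => (lam+s)^n*(t+s)) A' 0 := by
    have h := (hls.fun_pow n).fun_mul hts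
    simp only [add_zero, mul_one] at h
    exact h
  have hBd : HasDerivAt (fun s => a*(lam+s)^k + b*(lam+s)^(k-1)*(t+s)) B' 0 := by
    have h := (((hls.fun_pow k).const_mul a)).fun_add ((((hls.fun_pow (k-1)).fun_mul hts)).const_mul b)
    simp only [add_zero, mul_one] at h
    have hf : (fun s => a*(lam+s)^k + b*(lam+s)^(k-1)*(t+s))
        = (fun i => a * (lam + i) ^ k + b * ((lam + i) ^ (k - 1) * (t + i))) := by
      funext s; ring
    rw [hf]
    refine h.congr_deriv ?_
    · rw [hB', show k-1-1 = k-2 from by omega, Nat.cast_sub hk1]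
      push_cast
      ring
  have hQd : HasDerivAt (fun s => ((lam+s)^n*(t+s)) / (a*(lam+s)^k + b*(lam+s)^(k-1)*(t+s)))
      ((A' * (a*lam^k + b*lam^(k-1)*t) - (lam^n*t) * B') / (a*lam^k + b*lam^(k-1)*t)^2) 0 := by
    have h := hAd.fun_div hBd (by simpa using hB0pos.ne')
    simpa using h
  have hQ0ne : (lam^n*t) / (a*lam^k + b*lam^(k-1)*t) ≠ 0 := (div_pos hA0pos hB0pos).ne'
  have hφd : HasDerivAt (fun s => fnk (n+1) k (γ s))
      (C * (((A' * (a*lam^k + b*lam^(k-1)*t) - (lam^n*t) * B') / (a*lam^k + b*lam^(k-1)*t)^2) * p *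
        ((lam^n*t) / (a*lam^k + b*lam^(k-1)*t)) ^ (p-1))) 0 := by
    rw [hφ]
    have h := (hQd.rpow_const (p := p) (by simpa using Or.inl hQ0ne)).const_mul C
    simpa using h
  have hkey : fderiv ℝ (fnk (n+1) k) x₀ (fun _ => 1)
      = C * (((A' * (a*lam^k + b*lam^(k-1)*t) - (lam^n*t) * B') / (a*lam^k + b*lam^(k-1)*t)^2) * p *
        ((lam^n*t) / (a*lam^k + b*lam^(k-1)*t)) ^ (p-1)) := hcomp.unique hφd
  -- level set hypothesis in explicit form
  have h1' : C * ((lam^n*t) / (a*lam^k + b*lam^(k-1)*t)) ^ p = 1 := by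
    rw [fnk, hcast, hA0, hB0] at h1
    exact h1
  -- final algebra
  rw [hsum, hkey]
  rw [Real.rpow_sub_one (div_pos hA0pos hB0pos).ne' p]
  have expand : C * ((A' * (a*lam^k + b*lam^(k-1)*t) - (lam^n*t) * B') / (a*lam^k + b*lam^(k-1)*t)^2 * p *
      (((lam^n*t) / (a*lam^k + b*lam^(k-1)*t)) ^ p / ((lam^n*t) / (a*lam^k + b*lam^(k-1)*t))))
      = (C * ((lam^n*t) / (a*lam^k + b*lam^(k-1)*t)) ^ p) * p *
        (A'/(lam^n*t) - B'/(a*lam^k + b*lam^(k-1)*t)) := by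
    field_simp
  rw [expand, h1', one_mul, hp]

lemma fnk_eq_one (hk1 : 1 ≤ k) (hkn : k ≤ n) (lam t : ℝ) (hl : 0 < lam) (ht : 0 < t)
    (h : (((n+1).choose k : ℝ)) * (lam^n*t)
        = (n.choose k:ℝ)*lam^k + (n.choose (k-1):ℝ)*lam^(k-1)*t) :
    fnk (n+1) k (Fin.snoc (fun _ => lam) t) = 1 := by
  have hCh : (0:ℝ) < ((n+1).choose k : ℝ) := by
    exact_mod_cast Nat.choose_pos (by omega)
  have hA0pos : (0:ℝ) < lam^n*t := by positivity
  rw [fnk, esymm_snoc n (n+1) (by omega), esymm_snoc n k hk1]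
  have hsimp : (n.choose (n+1) : ℝ) * lam ^ (n+1) + (n.choose (n+1-1) : ℝ) * lam ^ (n+1-1) * t
      = lam^n*t := by
    simp [Nat.choose_eq_zero_of_lt (Nat.lt_succ_self n)]
  rw [hsimp, ← h]
  rw [← Real.mul_rpow (le_of_lt hCh) (by positivity)]
  rw [show ((n+1).choose k : ℝ) * ((lam^n*t) / (((n+1).choose k : ℝ) * (lam^n*t))) = 1 by
    field_simp]
  exact Real.one_rpow _


/-- For the curvature quotient `f_{n+1,k}` (so `1 ≤ k ≤ n`), the quantity
`μ_∞ = ((n+1)/k)^{1/(n+1-k)}` exceeds `1`, and along the curve `(λ(t),…,λ(t),t)` in the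
unit level set of `f_{n+1,k}`, the sum of the partial derivatives of `f_{n+1,k}` tends to
`((n+1)/k)^{1/(n+1-k)}` as `t → ∞`. -/
theorem curvature_quotient_mu_infinity (n k : ℕ) (hk1 : 1 ≤ k) (hkn : k ≤ n) :
    (1 : ℝ) < (((n : ℝ) + 1) / (k : ℝ)) ^ ((1 : ℝ) / ((n : ℝ) + 1 - (k : ℝ))) ∧
      ∃ lam : ℝ → ℝ,
        (∀ᶠ t in atTop, 0 < lam t ∧
          fnk (n + 1) k (Fin.snoc (fun _ => lam t) t) = 1) ∧
        Tendsto
          (fun t : ℝ => ∑ i : Fin (n + 1),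
            fderiv ℝ (fnk (n + 1) k) (Fin.snoc (fun _ => lam t) t) (Pi.single i 1))
          atTop
          (𝓝 ((((n : ℝ) + 1) / (k : ℝ)) ^ ((1 : ℝ) / ((n : ℝ) + 1 - (k : ℝ))))) := by
  have hk0 : (0:ℝ) < k := by exact_mod_cast hk1
  have hn1k : (0:ℝ) < (n:ℝ)+1-(k:ℝ) := by
    have : (k:ℝ) ≤ n := by exact_mod_cast hkn
    linarith
  set p : ℝ := (1:ℝ)/((n:ℝ)+1-(k:ℝ)) with hp
  have hp0 : 0 < p := by positivity
  have hbase : (1:ℝ) < ((n:ℝ)+1)/(k:ℝ) := by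
    rw [lt_div_iff₀ hk0]; linarith
  have hμ : (1:ℝ) < (((n:ℝ)+1)/(k:ℝ)) ^ p :=
    Real.one_lt_rpow_iff_of_pos (by positivity) |>.2 (Or.inl ⟨hbase, hp0⟩)
  refine ⟨hμ, ?_⟩
  -- constants
  set N : ℕ := n + 1 - k with hN
  have hN1 : 1 ≤ N := by omega
  set a : ℝ := (n.choose k : ℝ) with ha
  set b : ℝ := (n.choose (k-1) : ℝ) with hb
  set Ch : ℝ := ((n+1).choose k : ℝ) with hCh
  have ha0 : 0 < a := by rw [ha]; exact_mod_cast Nat.choose_pos hkn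
  have hb0 : 0 < b := by rw [hb]; exact_mod_cast Nat.choose_pos (by omega)
  have hCh0 : 0 < Ch := by rw [hCh]; exact_mod_cast Nat.choose_pos (by omega)
  set c : ℝ := ((k:ℝ)/((n:ℝ)+1)) ^ p with hc
  have hc0 : 0 < c := Real.rpow_pos_of_pos (by positivity) _
  have hcN : c ^ N = (k:ℝ)/((n:ℝ)+1) := by
    rw [hc, ← Real.rpow_natCast (((k:ℝ)/((n:ℝ)+1)) ^ p) N, ← Real.rpow_mul (by positivity)]
    have hNcast : ((N:ℕ):ℝ) = (n:ℝ)+1-(k:ℝ) := by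
      rw [hN]; push_cast [Nat.cast_sub (by omega : k ≤ n+1)]; ring
    rw [hNcast, hp, one_div, inv_mul_cancel₀ hn1k.ne', Real.rpow_one]
  have hChc : Ch * c ^ N = b := by
    rw [hcN]
    have hnat : (n+1).choose k * k = (n+1) * n.choose (k-1) := by
      obtain ⟨k', rfl⟩ : ∃ k', k = k' + 1 := ⟨k - 1, by omega⟩
      simp only [Nat.add_sub_cancel]
      have h := Nat.add_one_mul_choose_eq n k'
      exact h.symm
    rw [hCh, hb]
    field_simp
    exact_mod_cast hnat
  -- the root function
  set H : ℝ → ℝ → ℝ := fun l t => Ch * l^N * t - a*l - b*t with hH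
  have hHc : ∀ t, H c t = -(a*c) + (0:ℝ)*t := by
    intro t
    simp only [hH]
    linear_combination t * hChc
  have h2cN : Ch*(2*c)^N = 2^N*b := by
    rw [mul_pow, ← hChc]; ring
  have hH2c : ∀ t, H (2*c) t = b*((2:ℝ)^N - 1)*t - 2*(a*c) := by
    intro t
    simp only [hH]
    linear_combination t * h2cN
  have h2N : (1:ℝ) ≤ (2:ℝ)^N - 1 := by
    have : (2:ℝ)^1 ≤ (2:ℝ)^N := pow_le_pow_right₀ (by norm_num) hN1
    simp only [pow_one] at this; linarith
  have hHcont : ∀ t, ContinuousOn (fun l => H l t) (Set.Icc c (2*c)) := by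
    intro t
    simp only [hH]
    fun_prop
  set T₁ : ℝ := max 1 (2*(a*c)/(b*((2:ℝ)^N-1)) + 1) with hT₁
  have hroot : ∀ t : ℝ, T₁ ≤ t → ∃ l ∈ Set.Ioo c (2*c), H l t = 0 := by
    intro t hTt
    have ht1 : (1:ℝ) ≤ t := le_trans (le_max_left _ _) hTt
    have hneg : H c t < 0 := by
      rw [hHc]; simp; positivity
    have hposd : 0 < b*((2:ℝ)^N-1) := mul_pos hb0 (by linarith)
    have hpos : 0 < H (2*c) t := by
      rw [hH2c]
      have ht2 : 2*(a*c)/(b*((2:ℝ)^N-1)) + 1 ≤ t := le_trans (le_max_right _ _) hTt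
      rw [div_add' _ _ _ hposd.ne', div_le_iff₀ hposd] at ht2
      linarith
    have hmem : (0:ℝ) ∈ Set.Ioo (H c t) (H (2*c) t) := ⟨hneg, hpos⟩
    have := intermediate_value_Ioo (by linarith : c ≤ 2*c) (hHcont t) hmem
    rcases this with ⟨l, hl, hl0⟩
    exact ⟨l, hl, hl0⟩
  classical
  -- define lam by choice
  set lam : ℝ → ℝ := fun t =>
    if h : ∃ l ∈ Set.Ioo c (2*c), H l t = 0 then h.choose else 1 with hlamdef
  have hlam : ∀ t : ℝ, T₁ ≤ t → lam t ∈ Set.Ioo c (2*c) ∧ H (lam t) t = 0 := by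
    intro t hTt
    have h := hroot t hTt
    simp only [hlamdef, dif_pos h]
    exact ⟨h.choose_spec.1, h.choose_spec.2⟩
  -- level set property
  have hlevel : ∀ t : ℝ, T₁ ≤ t → 0 < lam t ∧
      fnk (n+1) k (Fin.snoc (fun _ => lam t) t) = 1 := by
    intro t hTt
    obtain ⟨⟨hcl, hl2c⟩, hH0⟩ := hlam t hTt
    have hl0 : 0 < lam t := lt_trans hc0 hcl
    have ht0 : (0:ℝ) < t := lt_of_lt_of_le one_pos (le_trans (le_max_left _ _) hTt)
    refine ⟨hl0, fnk_eq_one n k hk1 hkn _ t hl0 ht0 ?_⟩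
    have heq : Ch * (lam t)^N * t = a * lam t + b * t := by
      simp only [hH] at hH0; linarith
    have hpowk : (lam t)^(k-1) * lam t = (lam t)^k := by
      rw [← pow_succ, Nat.sub_add_cancel hk1]
    have hpown : (lam t)^(k-1) * (lam t)^N = (lam t)^n := by
      rw [← pow_add, show k-1+N = n from by omega]
    calc Ch * ((lam t)^n * t) = (lam t)^(k-1) * (Ch * (lam t)^N * t) := by
          rw [← hpown]; ring
      _ = (lam t)^(k-1) * (a * lam t + b * t) := by rw [heq]
      _ = a*(lam t)^k + b*(lam t)^(k-1)*t := by rw [← hpowk]; ring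
  -- lam tends to c
  have hlamc : Tendsto lam atTop (𝓝 c) := by
    rw [Metric.tendsto_atTop]
    intro ε hε
    set ε' : ℝ := min ε c with hε'
    have hε'0 : 0 < ε' := lt_min hε hc0
    have hε'c : ε' ≤ c := min_le_right _ _
    set δ : ℝ := Ch*(c+ε')^N - b with hδ
    have hδ0 : 0 < δ := by
      rw [hδ, ← hChc]
      have : c^N < (c+ε')^N := by
        apply pow_lt_pow_left₀ (by linarith) (le_of_lt hc0) (by omega)
      exact sub_pos.2 (mul_lt_mul_of_pos_left this hCh0)
    refine ⟨max T₁ (2*(a*c)/δ + 1), fun t hTt => ?_⟩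
    have hT1t : T₁ ≤ t := le_trans (le_max_left _ _) hTt
    obtain ⟨⟨hcl, hl2c⟩, hH0⟩ := hlam t hT1t
    have ht0 : (0:ℝ) < t := lt_of_lt_of_le one_pos (le_trans (le_max_left _ _) hT1t)
    have hlt : lam t < c + ε' := by
      by_contra hge
      push_neg at hge
      have hpowge : (c+ε')^N ≤ (lam t)^N :=
        pow_le_pow_left₀ (by positivity) hge N
      have ht2 : 2*(a*c)/δ + 1 ≤ t := le_trans (le_max_right _ _) hTt
      rw [div_add' _ _ _ hδ0.ne', div_le_iff₀ hδ0] at ht2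
      have : 0 < H (lam t) t := by
        simp only [hH]
        have h1 : Ch*(c+ε')^N*t ≤ Ch*(lam t)^N*t :=
          mul_le_mul_of_nonneg_right (mul_le_mul_of_nonneg_left hpowge hCh0.le) ht0.le
        have h2 : a*(lam t) ≤ a*(2*c) := mul_le_mul_of_nonneg_left hl2c.le ha0.le
        have h2' : a*(2*c) = 2*(a*c) := by ring
        have h4 : Ch*(c+ε')^N*t = δ*t + b*t := by rw [hδ]; ring
        linarith
      linarith [this, hH0.le, hH0.ge]
    rw [Real.dist_eq, abs_lt]
    constructor
    · have : c < lam t := hcl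
      linarith [min_le_left ε c]
    · have : lam t - c < ε' := by linarith
      exact lt_of_lt_of_le this (min_le_left _ _)
  refine ⟨lam, (eventually_ge_atTop T₁).mono (fun t ht => hlevel t ht), ?_⟩
  -- algebraic identity for the summed derivative
  have key : ∀ l t : ℝ, 0 < l → 0 < t →
      (1/((n:ℝ)+1-k)) * (((n:ℝ)*l^(n-1)*t + l^n)/(l^n*t)
        - ((n.choose k:ℝ)*k*l^(k-1) + (n.choose (k-1):ℝ)*(((k:ℝ)-1)*l^(k-2)*t + l^(k-1)))
          /((n.choose k:ℝ)*l^k + (n.choose (k-1):ℝ)*l^(k-1)*t))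
      = p * (((n:ℝ)/l + 1/t)
        - ((n.choose k:ℝ)*(k:ℝ)*l^(k-1)*(1/t) + (n.choose (k-1):ℝ)*((k:ℝ)-1)*l^(k-2)
            + (n.choose (k-1):ℝ)*l^(k-1)*(1/t))
          / ((n.choose k:ℝ)*l^k*(1/t) + (n.choose (k-1):ℝ)*l^(k-1))) := by
    intro l t hl0 ht0
    have hln : (0:ℝ) < l^n := by positivity
    have hpn : l^(n-1)*l = l^n := by
      rw [← pow_succ, Nat.sub_add_cancel (le_trans hk1 hkn)]
    have h1 : ((n:ℝ)*l^(n-1)*t + l^n)/(l^n*t) = (n:ℝ)/l + 1/t := by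
      rw [div_add_div _ _ hl0.ne' ht0.ne', div_eq_div_iff (by positivity) (by positivity)]
      linear_combination ((n:ℝ)*t^2) * hpn
    have hden0 : (0:ℝ) < (n.choose k:ℝ)*l^k + (n.choose (k-1):ℝ)*l^(k-1)*t := by
      have hb0' : (0:ℝ) < (n.choose (k-1):ℝ) := by exact_mod_cast Nat.choose_pos (by omega)
      positivity
    have hNum : (n.choose k:ℝ)*(k:ℝ)*l^(k-1)*(1/t) + (n.choose (k-1):ℝ)*((k:ℝ)-1)*l^(k-2)
            + (n.choose (k-1):ℝ)*l^(k-1)*(1/t)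
        = ((n.choose k:ℝ)*k*l^(k-1) + (n.choose (k-1):ℝ)*(((k:ℝ)-1)*l^(k-2)*t + l^(k-1))) * (1/t) := by
      field_simp
      ring
    have hDen : (n.choose k:ℝ)*l^k*(1/t) + (n.choose (k-1):ℝ)*l^(k-1)
        = ((n.choose k:ℝ)*l^k + (n.choose (k-1):ℝ)*l^(k-1)*t) * (1/t) := by
      field_simp
    have h2 : ((n.choose k:ℝ)*(k:ℝ)*l^(k-1)*(1/t) + (n.choose (k-1):ℝ)*((k:ℝ)-1)*l^(k-2)
            + (n.choose (k-1):ℝ)*l^(k-1)*(1/t))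
          / ((n.choose k:ℝ)*l^k*(1/t) + (n.choose (k-1):ℝ)*l^(k-1))
        = ((n.choose k:ℝ)*k*l^(k-1) + (n.choose (k-1):ℝ)*(((k:ℝ)-1)*l^(k-2)*t + l^(k-1)))
          /((n.choose k:ℝ)*l^k + (n.choose (k-1):ℝ)*l^(k-1)*t) := by
      rw [hNum, hDen, mul_div_mul_right _ _ (by positivity : (1:ℝ)/t ≠ 0)]
    rw [h1, h2, hp]
  -- eventual equality with the explicit function F
  set F : ℝ → ℝ := fun t => p * (((n:ℝ)/lam t + 1/t)
      - ((n.choose k:ℝ)*(k:ℝ)*(lam t)^(k-1)*(1/t) + (n.choose (k-1):ℝ)*((k:ℝ)-1)*(lam t)^(k-2)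
          + (n.choose (k-1):ℝ)*(lam t)^(k-1)*(1/t))
        / ((n.choose k:ℝ)*(lam t)^k*(1/t) + (n.choose (k-1):ℝ)*(lam t)^(k-1))) with hF
  have hEeq : (fun t : ℝ => ∑ i : Fin (n+1),
      fderiv ℝ (fnk (n+1) k) (Fin.snoc (fun _ => lam t) t) (Pi.single i 1)) =ᶠ[atTop] F := by
    filter_upwards [eventually_ge_atTop T₁] with t ht
    have ht0 : (0:ℝ) < t := lt_of_lt_of_le one_pos (le_trans (le_max_left _ _) ht)
    obtain ⟨hl0, hone⟩ := hlevel t ht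
    rw [sum_partials n k hk1 hkn (lam t) t hl0 ht0 hone, key (lam t) t hl0 ht0]
  -- the limit of F
  have hinv : Tendsto (fun t : ℝ => 1/t) atTop (𝓝 0) := by
    simpa [one_div] using tendsto_inv_atTop_zero
  have hb0' : (0:ℝ) < (n.choose (k-1):ℝ) := by exact_mod_cast Nat.choose_pos (by omega)
  have hDenL : (n.choose k:ℝ)*c^k*0 + (n.choose (k-1):ℝ)*c^(k-1) ≠ 0 := by
    have : (0:ℝ) < (n.choose (k-1):ℝ)*c^(k-1) := by positivity
    simpa using this.ne'
  have hFlim : Tendsto F atTop (𝓝 (p * (((n:ℝ)/c + 0)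
      - ((n.choose k:ℝ)*(k:ℝ)*c^(k-1)*0 + (n.choose (k-1):ℝ)*((k:ℝ)-1)*c^(k-2)
          + (n.choose (k-1):ℝ)*c^(k-1)*0)
        / ((n.choose k:ℝ)*c^k*0 + (n.choose (k-1):ℝ)*c^(k-1))))) := by
    rw [hF]
    apply Tendsto.const_mul
    apply Tendsto.sub
    · exact (tendsto_const_nhds.div hlamc hc0.ne').add hinv
    · apply Tendsto.div
      · exact (((tendsto_const_nhds.mul (hlamc.pow (k-1))).mul hinv).add
          (tendsto_const_nhds.mul (hlamc.pow (k-2)))).add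
          ((tendsto_const_nhds.mul (hlamc.pow (k-1))).mul hinv)
      · exact ((tendsto_const_nhds.mul (hlamc.pow k)).mul hinv).add
          (tendsto_const_nhds.mul (hlamc.pow (k-1)))
      · exact hDenL
  -- identify the limit value
  have hval : p * (((n:ℝ)/c + 0)
      - ((n.choose k:ℝ)*(k:ℝ)*c^(k-1)*0 + (n.choose (k-1):ℝ)*((k:ℝ)-1)*c^(k-2)
          + (n.choose (k-1):ℝ)*c^(k-1)*0)
        / ((n.choose k:ℝ)*c^k*0 + (n.choose (k-1):ℝ)*c^(k-1)))
      = (((n:ℝ)+1)/(k:ℝ)) ^ p := by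
    have hstep1 : ((n.choose k:ℝ)*(k:ℝ)*c^(k-1)*0 + (n.choose (k-1):ℝ)*((k:ℝ)-1)*c^(k-2)
          + (n.choose (k-1):ℝ)*c^(k-1)*0)
        / ((n.choose k:ℝ)*c^k*0 + (n.choose (k-1):ℝ)*c^(k-1)) = ((k:ℝ)-1)/c := by
      rcases Nat.lt_or_ge k 2 with hk2 | hk2
      · have hk1' : k = 1 := by omega
        subst hk1'
        simp
      · have hpow : c^(k-2)*c = c^(k-1) := by
          rw [← pow_succ, show k-2+1 = k-1 from by omega]
        have hden' : (n.choose k:ℝ)*c^k*0 + (n.choose (k-1):ℝ)*c^(k-1)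
            = (n.choose (k-1):ℝ)*c^(k-1) := by ring
        rw [hden', div_eq_div_iff (by positivity) hc0.ne']
        linear_combination ((n.choose (k-1):ℝ)*((k:ℝ)-1)) * hpow
    rw [hstep1]
    have hstep3 : (((n:ℝ)+1)/(k:ℝ)) ^ p = 1/c := by
      rw [eq_div_iff hc0.ne', hc, ← Real.mul_rpow (by positivity) (by positivity),
        show (((n:ℝ)+1)/(k:ℝ))*((k:ℝ)/((n:ℝ)+1)) = 1 by field_simp, Real.one_rpow]
    rw [hstep3, hp]
    have hsum : (n:ℝ)/c + 0 - ((k:ℝ)-1)/c = ((n:ℝ)+1-(k:ℝ))/c := by ring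
    rw [hsum, div_mul_div_comm, one_mul, div_mul_cancel_left₀ hn1k.ne', one_div]
  rw [← hval]
  exact hFlim.congr' hEeq.symm
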